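/- Let Λ > 0 and Δ > 0, suppose 𝒳 = {x^0, x^1, …, x^p} ⊂ B(x^0, Δ) is Λ-poised in B(x^0, Δ) in the minimum Frobenius norm sense. Let f be continuously differentiable on an open set Ω ⊇ B(x^0, Δ) with ∇f Lipschitz continuous on Ω with constant L. Let f̃(x^i) = f(x^i) + e_i with ε_i = |e_i| for i = 0, …, p, and let m be the MFN interpolation model with data (f̃(x^0), …, f̃(x^p)). Then ‖∇²m(x^0)‖ ≤ 4(p+1) Λ L √((d+1)(d+2)) / ν(Δ) + (8Λ√((d+1)(d+2)) / (Δ² ν(Δ))) Σ_{i=0}^p ε_i, where ν(Δ) = min{1, 1/Δ, 1/Δ²}. -/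

import Mathlib

noncomputable section

open scoped RealInnerProductSpace
open Matrix

/-- Index type for the degree-two monomials `x_i x_j` with `i ≤ j`;
it has cardinality `d(d+1)/2`. -/
abbrev QIdx (d : ℕ) := {ij : Fin d × Fin d // ij.1 ≤ ij.2}

/-- The vector `μ(y) = (1, y_1, …, y_d)` of degree-zero and degree-one monomials. -/
def muVec {d : ℕ} (y : EuclideanSpace ℝ (Fin d)) : Fin (d + 1) → ℝ :=
  Fin.cons 1 fun j => y j

/-- The vector `ν(y)` of degree-two monomials `y_i y_j`, `i ≤ j`. -/
def nuVec {d : ℕ} (y : EuclideanSpace ℝ (Fin d)) : QIdx d → ℝ :=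
  fun ij => y ij.1.1 * y ij.1.2

/-- The matrix `M` with `M_{ij} = μ_i(x^j)`. -/
def Mmat {d p : ℕ} (x : Fin (p + 1) → EuclideanSpace ℝ (Fin d)) :
    Matrix (Fin (d + 1)) (Fin (p + 1)) ℝ :=
  Matrix.of fun i j => muVec (x j) i

/-- The matrix `N` with `N_{ij} = ν_i(x^j)`. -/
def Nmat {d p : ℕ} (x : Fin (p + 1) → EuclideanSpace ℝ (Fin d)) :
    Matrix (QIdx d) (Fin (p + 1)) ℝ :=
  Matrix.of fun i j => nuVec (x j) i

/-- The KKT matrix `W = [[NᵀN, Mᵀ], [M, 0]]`. -/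
def Wmat {d p : ℕ} (x : Fin (p + 1) → EuclideanSpace ℝ (Fin d)) :
    Matrix (Fin (p + 1) ⊕ Fin (d + 1)) (Fin (p + 1) ⊕ Fin (d + 1)) ℝ :=
  Matrix.fromBlocks ((Nmat x)ᵀ * Nmat x) (Mmat x)ᵀ (Mmat x) 0

/-- `𝒳` is poised in the minimum Frobenius norm sense: the KKT matrix `W` is nonsingular. -/
def MFNPoised {d p : ℕ} (x : Fin (p + 1) → EuclideanSpace ℝ (Fin d)) : Prop :=
  IsUnit (Wmat x).det

/-- The quadratic polynomial `m(y) = αᵀμ(y) + βᵀν(y)` with coefficients `(α, β)`. -/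
def modelFun {d : ℕ} (a : Fin (d + 1) → ℝ) (b : QIdx d → ℝ)
    (y : EuclideanSpace ℝ (Fin d)) : ℝ :=
  (∑ i, a i * muVec y i) + ∑ ij, b ij * nuVec y ij

/-- `(α, β)` solves the minimum Frobenius norm interpolation problem for the data `v`:
it satisfies the interpolation constraints `Mᵀα + Nᵀβ = v` and minimizes `(1/2)‖β‖²`
among all coefficient pairs satisfying the constraints. -/
def IsMFNSol {d p : ℕ} (x : Fin (p + 1) → EuclideanSpace ℝ (Fin d))
    (v : Fin (p + 1) → ℝ) (a : Fin (d + 1) → ℝ) (b : QIdx d → ℝ) : Prop :=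
  (Mmat x)ᵀ.mulVec a + (Nmat x)ᵀ.mulVec b = v ∧
    ∀ (a' : Fin (d + 1) → ℝ) (b' : QIdx d → ℝ),
      (Mmat x)ᵀ.mulVec a' + (Nmat x)ᵀ.mulVec b' = v →
      ∑ ij, (b ij) ^ 2 ≤ ∑ ij, (b' ij) ^ 2

/-- The operator 2-norm of a real matrix. -/
noncomputable def opNorm2 {ι κ : Type*} [Fintype ι] [Fintype κ] [DecidableEq κ]
    (M : Matrix ι κ ℝ) : ℝ :=
  ‖(Matrix.toEuclideanLin M).toContinuousLinearMap‖

/-- The Hessian matrix of the quadratic polynomial `y ↦ αᵀμ(y) + βᵀν(y)`: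
its `(j,k)` entry is `β_{jk}` for `j ≠ k` and `2β_{jj}` on the diagonal. -/
def hessOf {d : ℕ} (b : QIdx d → ℝ) : Matrix (Fin d) (Fin d) ℝ :=
  Matrix.of fun j k =>
    if h : j < k then b ⟨(j, k), le_of_lt h⟩
    else if h' : k < j then b ⟨(k, j), le_of_lt h'⟩
    else 2 * b ⟨(j, j), le_refl j⟩

open Finset in
lemma quad_zero {A B : ℝ} (hA : 0 ≤ A) (h : ∀ t : ℝ, 0 ≤ A * t ^ 2 + B * t) : B = 0 := by
  have hu : (0:ℝ) < A + 1 := by linarith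
  have ht := h (-B / (A + 1))
  have h2 : A * (-B/(A+1))^2 + B * (-B/(A+1)) = -(B^2) / (A+1)^2 := by
    field_simp; ring
  rw [h2] at ht
  have h3 : (0:ℝ) ≤ -(B^2) := by
    have hp : (0:ℝ) < (A+1)^2 := by positivity
    have := mul_nonneg ht hp.le
    rwa [div_mul_cancel₀ _ hp.ne'] at this
  nlinarith [sq_nonneg B]

lemma sum_mul_swap {ι κ : Type*} [Fintype ι] [Fintype κ] (v : ι → ℝ) (F : ι → κ → ℝ)
    (g : κ → ℝ) : ∑ q, (∑ i, v i * F i q) * g q = ∑ i, v i * ∑ q, F i q * g q := by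
  simp_rw [Finset.sum_mul, Finset.mul_sum, mul_assoc]
  exact Finset.sum_comm

lemma mfn_orth {d p : ℕ} {x : Fin (p+1) → EuclideanSpace ℝ (Fin d)}
    {v : Fin (p+1) → ℝ} {a : Fin (d+1) → ℝ} {b : QIdx d → ℝ}
    (hsol : IsMFNSol x v a b) {a0 : Fin (d+1) → ℝ} {b0 : QIdx d → ℝ}
    (h0 : (Mmat x)ᵀ.mulVec a0 + (Nmat x)ᵀ.mulVec b0 = 0) :
    ∑ ij, b ij * b0 ij = 0 := by
  have key : ∀ t : ℝ, 0 ≤ (∑ ij, (b0 ij)^2) * t^2 + (2 * ∑ ij, b ij * b0 ij) * t := by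
    intro t
    have hfeas : (Mmat x)ᵀ.mulVec (a + t • a0) + (Nmat x)ᵀ.mulVec (b + t • b0) = v := by
      rw [Matrix.mulVec_add, Matrix.mulVec_add, Matrix.mulVec_smul, Matrix.mulVec_smul]
      have : ((Mmat x)ᵀ.mulVec a + (Nmat x)ᵀ.mulVec b)
          + t • ((Mmat x)ᵀ.mulVec a0 + (Nmat x)ᵀ.mulVec b0) = v := by
        rw [hsol.1, h0, smul_zero, add_zero]
      rw [← this, smul_add]; abel
    have hmin := hsol.2 _ _ hfeas
    have expand : ∑ ij, ((b + t • b0) ij)^2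
        = ∑ ij, (b ij)^2 + ((∑ ij, (b0 ij)^2) * t^2 + (2 * ∑ ij, b ij * b0 ij) * t) := by
      have h1 : ∀ ij ∈ Finset.univ (α := QIdx d), ((b + t • b0) ij)^2
          = (b ij)^2 + ((b0 ij)^2 * t^2 + (2 * (b ij * b0 ij)) * t) := by
        intro ij _; simp only [Pi.add_apply, Pi.smul_apply, smul_eq_mul]; ring
      rw [Finset.sum_congr rfl h1, Finset.sum_add_distrib, Finset.sum_add_distrib,
        ← Finset.sum_mul, ← Finset.sum_mul, ← Finset.mul_sum]
    rw [expand] at hmin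
    linarith
  have h2 := quad_zero (Finset.sum_nonneg fun ij _ => sq_nonneg _) key
  linarith

lemma mfn_uniq {d p : ℕ} {x : Fin (p+1) → EuclideanSpace ℝ (Fin d)}
    {v : Fin (p+1) → ℝ} {a a' : Fin (d+1) → ℝ} {b b' : QIdx d → ℝ}
    (h1 : IsMFNSol x v a b) (h2 : IsMFNSol x v a' b') : b = b' := by
  have h0 : (Mmat x)ᵀ.mulVec (a - a') + (Nmat x)ᵀ.mulVec (b - b') = 0 := by
    rw [Matrix.mulVec_sub, Matrix.mulVec_sub]
    have : ((Mmat x)ᵀ.mulVec a + (Nmat x)ᵀ.mulVec b)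
        - ((Mmat x)ᵀ.mulVec a' + (Nmat x)ᵀ.mulVec b') = 0 := by
      rw [h1.1, h2.1, sub_self]
    rw [← this]; abel
  have o1 := mfn_orth h1 h0
  have o2 := mfn_orth h2 h0
  have hz : ∑ ij, (b ij - b' ij)^2 = 0 := by
    have he : ∑ ij, (b ij - b' ij)^2
        = ∑ ij, b ij * (b - b') ij - ∑ ij, b' ij * (b - b') ij := by
      rw [← Finset.sum_sub_distrib]
      refine Finset.sum_congr rfl fun ij _ => ?_
      simp only [Pi.sub_apply]; ring
    rw [he, o1, o2, sub_zero]
  funext ij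
  have := (Finset.sum_eq_zero_iff_of_nonneg (fun i _ => sq_nonneg _)).mp hz ij (Finset.mem_univ _)
  exact sub_eq_zero.mp ((pow_eq_zero_iff two_ne_zero).mp this)
lemma sum_lagrange_sol {d p : ℕ} {x : Fin (p+1) → EuclideanSpace ℝ (Fin d)}
    {la : Fin (p+1) → Fin (d+1) → ℝ} {lb : Fin (p+1) → QIdx d → ℝ}
    (hl : ∀ i, IsMFNSol x (Pi.single i 1) (la i) (lb i)) (v : Fin (p+1) → ℝ) :
    IsMFNSol x v (fun k => ∑ i, v i * la i k) (fun ij => ∑ i, v i * lb i ij) := by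
  have hfeas : (Mmat x)ᵀ.mulVec (fun k => ∑ i, v i * la i k)
      + (Nmat x)ᵀ.mulVec (fun ij => ∑ i, v i * lb i ij) = v := by
    funext j
    have hli : ∀ i, ((Mmat x)ᵀ.mulVec (la i) + (Nmat x)ᵀ.mulVec (lb i)) j
        = (Pi.single i 1 : Fin (p+1) → ℝ) j := fun i => congrFun (hl i).1 j
    simp only [Pi.add_apply, Matrix.mulVec, dotProduct] at hli ⊢
    have e1 : ∑ k, (Mmat x)ᵀ j k * ∑ i, v i * la i k
        = ∑ i, v i * ∑ k, la i k * (Mmat x)ᵀ j k := by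
      rw [← sum_mul_swap (v := v) (F := fun i k => la i k) (g := fun k => (Mmat x)ᵀ j k)]
      exact Finset.sum_congr rfl fun k _ => mul_comm _ _
    have e2 : ∑ q, (Nmat x)ᵀ j q * ∑ i, v i * lb i q
        = ∑ i, v i * ∑ q, lb i q * (Nmat x)ᵀ j q := by
      rw [← sum_mul_swap (v := v) (F := fun i q => lb i q) (g := fun q => (Nmat x)ᵀ j q)]
      exact Finset.sum_congr rfl fun q _ => mul_comm _ _
    rw [e1, e2, ← Finset.sum_add_distrib]
    have e3 : ∀ i, v i * ∑ k, la i k * (Mmat x)ᵀ j k + v i * ∑ q, lb i q * (Nmat x)ᵀ j q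
        = v i * (Pi.single i 1 : Fin (p+1) → ℝ) j := by
      intro i
      rw [← mul_add, ← hli i]
      congr 2
      · exact Finset.sum_congr rfl fun k _ => mul_comm _ _
      · exact Finset.sum_congr rfl fun q _ => mul_comm _ _
    rw [Finset.sum_congr rfl fun i _ => e3 i]
    simp [Pi.single_apply]
  refine ⟨hfeas, fun a' b' hfeas' => ?_⟩
  set bt : QIdx d → ℝ := fun ij => ∑ i, v i * lb i ij with hbt
  have h0 : (Mmat x)ᵀ.mulVec (a' - fun k => ∑ i, v i * la i k)
      + (Nmat x)ᵀ.mulVec (b' - bt) = 0 := by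
    rw [Matrix.mulVec_sub, Matrix.mulVec_sub]
    have : ((Mmat x)ᵀ.mulVec a' + (Nmat x)ᵀ.mulVec b')
        - ((Mmat x)ᵀ.mulVec (fun k => ∑ i, v i * la i k) + (Nmat x)ᵀ.mulVec bt) = 0 := by
      rw [hfeas', hfeas, sub_self]
    rw [← this]; abel
  have horth : ∑ ij, bt ij * (b' - bt) ij = 0 := by
    have hsw : ∑ ij, bt ij * (b' - bt) ij
        = ∑ i, v i * ∑ ij, lb i ij * (b' - bt) ij := by
      rw [← sum_mul_swap (v := v) (F := fun i ij => lb i ij) (g := fun ij => (b' - bt) ij)]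
    rw [hsw]
    exact Finset.sum_eq_zero fun i _ => by rw [mfn_orth (hl i) h0, mul_zero]
  have expand : ∑ ij, (b' ij)^2
      = ∑ ij, (bt ij)^2 + (2 * ∑ ij, bt ij * (b' - bt) ij + ∑ ij, ((b' - bt) ij)^2) := by
    rw [Finset.mul_sum, ← Finset.sum_add_distrib, ← Finset.sum_add_distrib]
    refine Finset.sum_congr rfl fun ij _ => ?_
    simp only [Pi.sub_apply]; ring
  rw [expand, horth]
  have := Finset.sum_nonneg (s := Finset.univ) fun ij (_ : ij ∈ Finset.univ) => sq_nonneg ((b' - bt) ij)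
  linarith
lemma model_second_diff {d : ℕ} (a : Fin (d+1) → ℝ) (b : QIdx d → ℝ)
    (x0 s : EuclideanSpace ℝ (Fin d)) :
    modelFun a b (x0 + s) + modelFun a b (x0 - s) - 2 * modelFun a b x0
      = 2 * ∑ ij : QIdx d, b ij * (s ij.1.1 * s ij.1.2) := by
  have hmu : ∀ i : Fin (d+1), a i * muVec (x0+s) i + a i * muVec (x0-s) i
      - 2 * (a i * muVec x0 i) = 0 := by
    intro i
    refine Fin.cases ?_ (fun j => ?_) i
    · simp [muVec]; ring
    · simp only [muVec, Fin.cons_succ, PiLp.add_apply, PiLp.sub_apply]; ring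
  have hnu : ∀ ij : QIdx d, b ij * nuVec (x0+s) ij + b ij * nuVec (x0-s) ij
      - 2 * (b ij * nuVec x0 ij) = 2 * (b ij * (s ij.1.1 * s ij.1.2)) := by
    intro ij
    simp only [nuVec, PiLp.add_apply, PiLp.sub_apply]; ring
  have e1 : ∑ i, a i * muVec (x0+s) i + ∑ i, a i * muVec (x0-s) i
      - 2 * ∑ i, a i * muVec x0 i = 0 := by
    rw [Finset.mul_sum, ← Finset.sum_add_distrib, ← Finset.sum_sub_distrib]
    exact Finset.sum_eq_zero fun i _ => hmu i
  have e2 : ∑ ij, b ij * nuVec (x0+s) ij + ∑ ij, b ij * nuVec (x0-s) ij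
      - 2 * ∑ ij, b ij * nuVec x0 ij = 2 * ∑ ij : QIdx d, b ij * (s ij.1.1 * s ij.1.2) := by
    rw [Finset.mul_sum, ← Finset.sum_add_distrib, ← Finset.sum_sub_distrib, Finset.mul_sum]
    exact Finset.sum_congr rfl fun ij _ => hnu ij
  simp only [modelFun]
  linarith [e1, e2]

lemma second_diff_bound {d : ℕ} {x0 : EuclideanSpace ℝ (Fin d)} {Δ Λ : ℝ} (hΔ : 0 < Δ)
    {a : Fin (d+1) → ℝ} {b : QIdx d → ℝ}
    (hb : ∀ y ∈ Metric.closedBall x0 Δ, |modelFun a b y| ≤ Λ)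
    (s : EuclideanSpace ℝ (Fin d)) (hs : ‖s‖ ≤ Δ) :
    |∑ ij : QIdx d, b ij * (s ij.1.1 * s ij.1.2)| ≤ 2 * Λ := by
  have h1 : x0 + s ∈ Metric.closedBall x0 Δ := by
    rw [Metric.mem_closedBall, dist_eq_norm]
    simpa using hs
  have h2 : x0 - s ∈ Metric.closedBall x0 Δ := by
    rw [Metric.mem_closedBall, dist_eq_norm]
    simpa using hs
  have h3 : x0 ∈ Metric.closedBall x0 Δ := Metric.mem_closedBall_self hΔ.le
  have b1 := hb _ h1
  have b2 := hb _ h2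
  have b3 := hb _ h3
  have hd := model_second_diff a b x0 s
  rw [abs_le] at b1 b2 b3 ⊢
  constructor <;> nlinarith [hd]
lemma diag_coeff_bound {d : ℕ} {x0 : EuclideanSpace ℝ (Fin d)} {Δ Λ : ℝ} (hΔ : 0 < Δ)
    {a : Fin (d+1) → ℝ} {b : QIdx d → ℝ}
    (hb : ∀ y ∈ Metric.closedBall x0 Δ, |modelFun a b y| ≤ Λ) (j : Fin d) :
    |b ⟨(j, j), le_refl j⟩| ≤ 2 * Λ / Δ ^ 2 := by
  set s : EuclideanSpace ℝ (Fin d) := EuclideanSpace.single j Δ with hs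
  have hns : ‖s‖ ≤ Δ := by
    rw [hs, EuclideanSpace.norm_single, Real.norm_eq_abs, abs_of_pos hΔ]
  have hsum : ∑ ij : QIdx d, b ij * (s ij.1.1 * s ij.1.2)
      = b ⟨(j, j), le_refl j⟩ * Δ ^ 2 := by
    rw [Finset.sum_eq_single (⟨(j, j), le_refl j⟩ : QIdx d)]
    · simp only [hs, EuclideanSpace.single_apply, if_pos rfl, if_true, eq_self_iff_true]; ring
    · intro q _ hq
      have : q.1.1 ≠ j ∨ q.1.2 ≠ j := by
        by_contra hc
        push_neg at hc
        exact hq (Subtype.ext (Prod.ext hc.1 hc.2))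
      rcases this with h | h <;> simp [hs, EuclideanSpace.single_apply, h]
    · intro h
      exact absurd (Finset.mem_univ _) h
  have := second_diff_bound hΔ hb s hns
  rw [hsum, abs_mul, abs_of_pos (by positivity : (0:ℝ) < Δ ^ 2)] at this
  rw [le_div_iff₀ (by positivity : (0:ℝ) < Δ ^ 2)]
  linarith

lemma offdiag_sum_eval {d : ℕ} (b : QIdx d → ℝ) {j k : Fin d} (hjk : j < k) (t : ℝ) (σ : ℝ)
    (s : EuclideanSpace ℝ (Fin d))
    (hsv : ∀ c, s c = (if c = j then t else 0) + (if c = k then σ * t else 0)) :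
    ∑ ij : QIdx d, b ij * (s ij.1.1 * s ij.1.2)
      = b ⟨(j, j), le_refl j⟩ * t ^ 2 + b ⟨(k, k), le_refl k⟩ * (σ * t) ^ 2
        + b ⟨(j, k), hjk.le⟩ * (σ * t ^ 2) := by
  classical
  have hne : j ≠ k := hjk.ne
  set S : Finset (QIdx d) :=
    {⟨(j, j), le_refl j⟩, ⟨(j, k), hjk.le⟩, ⟨(k, k), le_refl k⟩} with hS
  have hzero : ∀ q ∈ Finset.univ, q ∉ S → b q * (s q.1.1 * s q.1.2) = 0 := by
    intro q _ hq
    simp only [hS, Finset.mem_insert, Finset.mem_singleton] at hq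
    push_neg at hq
    obtain ⟨n1, n2, n3⟩ := hq
    have hs0 : ∀ c, c ≠ j → c ≠ k → s c = 0 := by
      intro c h1 h2; rw [hsv c]; simp [h1, h2]
    by_cases e1 : q.1.1 = j
    · by_cases e2 : q.1.2 = j
      · exact absurd (Subtype.ext (Prod.ext e1 e2)) n1
      · by_cases e3 : q.1.2 = k
        · exact absurd (Subtype.ext (Prod.ext e1 e3)) n2
        · rw [hs0 q.1.2 e2 e3]; ring
    · by_cases e4 : q.1.1 = k
      · by_cases e5 : q.1.2 = k
        · exact absurd (Subtype.ext (Prod.ext e4 e5)) n3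
        · by_cases e6 : q.1.2 = j
          · exfalso
            have := q.2
            rw [e4, e6] at this
            exact absurd (lt_of_lt_of_le hjk this) (lt_irrefl j)
          · rw [hs0 q.1.2 e6 e5]; ring
      · rw [hs0 q.1.1 e1 e4]; ring
  rw [← Finset.sum_subset (Finset.subset_univ S) hzero]
  have d1 : (⟨(j, j), le_refl j⟩ : QIdx d) ≠ ⟨(j, k), hjk.le⟩ :=
    fun hcon => hne (congrArg (fun q : QIdx d => q.1.2) hcon)
  have d2 : (⟨(j, j), le_refl j⟩ : QIdx d) ≠ ⟨(k, k), le_refl k⟩ :=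
    fun hcon => hne (congrArg (fun q : QIdx d => q.1.1) hcon)
  have d3 : (⟨(j, k), hjk.le⟩ : QIdx d) ≠ ⟨(k, k), le_refl k⟩ :=
    fun hcon => hne (congrArg (fun q : QIdx d => q.1.1) hcon)
  rw [hS, Finset.sum_insert (by simp [d1, d2]), Finset.sum_insert (by simp [d3]),
    Finset.sum_singleton]
  have sj : s j = t := by rw [hsv j]; simp [hne]
  have sk : s k = σ * t := by rw [hsv k]; simp [hne.symm]
  simp only [sj, sk]
  ring

lemma offdiag_coeff_bound {d : ℕ} {x0 : EuclideanSpace ℝ (Fin d)} {Δ Λ : ℝ} (hΔ : 0 < Δ)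
    {a : Fin (d+1) → ℝ} {b : QIdx d → ℝ}
    (hb : ∀ y ∈ Metric.closedBall x0 Δ, |modelFun a b y| ≤ Λ) {j k : Fin d} (hjk : j < k) :
    |b ⟨(j, k), hjk.le⟩| ≤ 4 * Λ / Δ ^ 2 := by
  have hne : j ≠ k := hjk.ne
  set t : ℝ := Δ / Real.sqrt 2 with hts
  have ht2 : t ^ 2 = Δ ^ 2 / 2 := by
    rw [hts, div_pow, Real.sq_sqrt (by norm_num : (2:ℝ) ≥ 0)]
  have hnorm : ∀ σ : ℝ, σ = 1 ∨ σ = -1 →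
      ‖(EuclideanSpace.single j t + σ • EuclideanSpace.single k t :
        EuclideanSpace ℝ (Fin d))‖ ≤ Δ := by
    intro σ hσ
    have hσ2 : σ ^ 2 = 1 := by rcases hσ with h | h <;> rw [h] <;> norm_num
    set s : EuclideanSpace ℝ (Fin d) :=
      EuclideanSpace.single j t + σ • EuclideanSpace.single k t with hs
    have hEq : ‖s‖ = Real.sqrt (∑ c, ‖s c‖ ^ 2) := EuclideanSpace.norm_eq s
    have hsum : ∑ c, ‖s c‖ ^ 2 = Δ ^ 2 := by
      have hterm : ∀ c, ‖s c‖ ^ 2 = (if c = j then t ^ 2 else 0) + (if c = k then t ^ 2 else 0) := by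
        intro c
        rw [Real.norm_eq_abs, sq_abs, hs]
        by_cases h1 : c = j
        · subst h1
          simp [EuclideanSpace.single_apply, hne]
        · by_cases h2 : c = k
          · subst h2
            simp only [PiLp.add_apply, PiLp.smul_apply, EuclideanSpace.single_apply,
              if_neg (Ne.symm hne), if_pos rfl, smul_eq_mul]
            simp only [h1, if_false, zero_add, if_pos rfl, if_true, eq_self_iff_true]
            nlinarith [hσ2]
          · simp [EuclideanSpace.single_apply, h1, h2]
      rw [Finset.sum_congr rfl fun c _ => hterm c, Finset.sum_add_distrib]
      simp [Finset.sum_ite_eq', ht2]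
    rw [hEq, hsum, Real.sqrt_sq hΔ.le]
  have key : ∀ σ : ℝ, σ = 1 ∨ σ = -1 →
      |b ⟨(j, j), le_refl j⟩ * t ^ 2 + b ⟨(k, k), le_refl k⟩ * t ^ 2
        + b ⟨(j, k), hjk.le⟩ * (σ * t ^ 2)| ≤ 2 * Λ := by
    intro σ hσ
    have hσ2 : σ ^ 2 = 1 := by rcases hσ with h | h <;> rw [h] <;> norm_num
    set s : EuclideanSpace ℝ (Fin d) :=
      EuclideanSpace.single j t + σ • EuclideanSpace.single k t with hs
    have hsv : ∀ c, s c = (if c = j then t else 0) + (if c = k then σ * t else 0) := by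
      intro c
      rw [hs]
      simp only [PiLp.add_apply, PiLp.smul_apply, EuclideanSpace.single_apply, smul_eq_mul]
      by_cases h2 : c = k <;> simp [h2]
    have heval := offdiag_sum_eval b hjk t σ s hsv
    have hb2 := second_diff_bound hΔ hb s (hnorm σ hσ)
    rw [heval] at hb2
    have : (σ * t) ^ 2 = t ^ 2 := by nlinarith [hσ2]
    rw [this] at hb2
    exact hb2
  have k1 := key 1 (Or.inl rfl)
  have k2 := key (-1) (Or.inr rfl)
  rw [abs_le] at k1 k2
  have hΔ2 : (0:ℝ) < Δ ^ 2 := by positivity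
  have hup : b ⟨(j, k), hjk.le⟩ * t ^ 2 ≤ 2 * Λ := by nlinarith [k1.2, k2.1]
  have hlo : -(2 * Λ) ≤ b ⟨(j, k), hjk.le⟩ * t ^ 2 := by nlinarith [k1.1, k2.2]
  rw [ht2] at hup hlo
  rw [abs_le]
  constructor
  · rw [neg_le, le_div_iff₀ hΔ2]
    linarith
  · rw [le_div_iff₀ hΔ2]
    linarith
lemma opNorm2_le_of_entry {dm : ℕ} (M : Matrix (Fin dm) (Fin dm) ℝ) (C : ℝ) (hC : 0 ≤ C)
    (h : ∀ i j, |M i j| ≤ C) : opNorm2 M ≤ dm * C := by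
  unfold opNorm2
  refine ContinuousLinearMap.opNorm_le_bound _ (by positivity) (fun v => ?_)
  have happ : ⇑(Matrix.toEuclideanLin M).toContinuousLinearMap = ⇑(Matrix.toEuclideanLin M) :=
    LinearMap.coe_toContinuousLinearMap' _
  rw [happ]
  set w : EuclideanSpace ℝ (Fin dm) := Matrix.toEuclideanLin M v with hw
  have hwc : ∀ i, w i = ∑ j, M i j * v j := by
    intro i
    rw [hw, Matrix.toEuclideanLin_apply]
    rfl
  have hnw : ‖w‖ = Real.sqrt (∑ i, ‖w i‖ ^ 2) := EuclideanSpace.norm_eq w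
  have hnv : ‖v‖ = Real.sqrt (∑ j, ‖v j‖ ^ 2) := EuclideanSpace.norm_eq v
  have hsq : ∑ i, ‖w i‖ ^ 2 ≤ (dm * C) ^ 2 * ∑ j, ‖v j‖ ^ 2 := by
    have step : ∀ i, ‖w i‖ ^ 2 ≤ (dm * C ^ 2) * ∑ j, ‖v j‖ ^ 2 := by
      intro i
      rw [Real.norm_eq_abs, sq_abs, hwc i]
      calc (∑ j, M i j * v j) ^ 2 ≤ (∑ j, (M i j) ^ 2) * ∑ j, (v j) ^ 2 :=
            Finset.sum_mul_sq_le_sq_mul_sq _ _ _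
        _ ≤ (dm * C ^ 2) * ∑ j, ‖v j‖ ^ 2 := by
            have h1 : ∑ j, (M i j) ^ 2 ≤ (dm : ℝ) * C ^ 2 := by
              calc ∑ j, (M i j) ^ 2 ≤ ∑ _j : Fin dm, C ^ 2 := by
                    refine Finset.sum_le_sum fun j _ => ?_
                    have := h i j
                    nlinarith [abs_nonneg (M i j), sq_abs (M i j)]
                _ = (dm : ℝ) * C ^ 2 := by
                    rw [Finset.sum_const, Finset.card_univ, Fintype.card_fin, nsmul_eq_mul]
            have h2 : ∑ j, (v j) ^ 2 = ∑ j, ‖v j‖ ^ 2 := by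
              exact Finset.sum_congr rfl fun j _ => by rw [Real.norm_eq_abs, sq_abs]
            rw [← h2]
            exact mul_le_mul_of_nonneg_right h1 (Finset.sum_nonneg fun j _ => sq_nonneg _)
    calc ∑ i, ‖w i‖ ^ 2 ≤ ∑ _i : Fin dm, (dm * C ^ 2) * ∑ j, ‖v j‖ ^ 2 :=
          Finset.sum_le_sum fun i _ => step i
      _ = (dm * C) ^ 2 * ∑ j, ‖v j‖ ^ 2 := by
          rw [Finset.sum_const, Finset.card_univ, Fintype.card_fin, nsmul_eq_mul]
          ring
  rw [hnw, hnv]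
  calc Real.sqrt (∑ i, ‖w i‖ ^ 2) ≤ Real.sqrt ((dm * C) ^ 2 * ∑ j, ‖v j‖ ^ 2) :=
        Real.sqrt_le_sqrt hsq
    _ = (dm * C) * Real.sqrt (∑ j, ‖v j‖ ^ 2) := by
        rw [Real.sqrt_mul (by positivity), Real.sqrt_sq (by positivity)]

lemma taylor_lin_bound {d : ℕ} (f : EuclideanSpace ℝ (Fin d) → ℝ)
    (Ω : Set (EuclideanSpace ℝ (Fin d))) (hΩ : IsOpen Ω)
    (x0 : EuclideanSpace ℝ (Fin d)) (Δ : ℝ) (hΔ : 0 < Δ)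
    (hBΩ : Metric.closedBall x0 Δ ⊆ Ω) (hf : ContDiffOn ℝ 1 f Ω)
    (L : ℝ) (hL : 0 ≤ L)
    (hlip : ∀ u ∈ Ω, ∀ v ∈ Ω, ‖gradient f u - gradient f v‖ ≤ L * ‖u - v‖) :
    ∀ y ∈ Metric.closedBall x0 Δ,
      |f y - f x0 - ∑ j, gradient f x0 j * (y j - x0 j)| ≤ L * Δ * Δ := by
  intro y hy
  set g := gradient f x0 with hg
  set F : EuclideanSpace ℝ (Fin d) → ℝ := fun z => f z - (innerSL ℝ g) z with hF
  have hdiff : ∀ z ∈ Metric.closedBall x0 Δ,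
      HasFDerivWithinAt F (fderiv ℝ f z - innerSL ℝ g) (Metric.closedBall x0 Δ) z := by
    intro z hz
    have hz' : z ∈ Ω := hBΩ hz
    have h1 : DifferentiableAt ℝ f z :=
      (hf.differentiableOn one_ne_zero).differentiableAt (hΩ.mem_nhds hz')
    exact ((h1.hasFDerivAt.sub ((innerSL ℝ g).hasFDerivAt))).hasFDerivWithinAt
  have hbound : ∀ z ∈ Metric.closedBall x0 Δ, ‖fderiv ℝ f z - innerSL ℝ g‖ ≤ L * Δ := by
    intro z hz
    have key : fderiv ℝ f z - innerSL ℝ g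
        = InnerProductSpace.toDual ℝ _ (gradient f z - g) := by
      rw [map_sub]
      congr 1
      exact ((InnerProductSpace.toDual ℝ _).apply_symm_apply _).symm
    rw [key, LinearIsometryEquiv.norm_map]
    have hz' : z ∈ Ω := hBΩ hz
    have hx0' : x0 ∈ Ω := hBΩ (Metric.mem_closedBall_self hΔ.le)
    calc ‖gradient f z - g‖ ≤ L * ‖z - x0‖ := hlip z hz' x0 hx0'
      _ ≤ L * Δ := by
          have : ‖z - x0‖ ≤ Δ := by
            rw [← dist_eq_norm]
            exact Metric.mem_closedBall.mp hz
          exact mul_le_mul_of_nonneg_left this hL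
  have hx0m : x0 ∈ Metric.closedBall x0 Δ := Metric.mem_closedBall_self hΔ.le
  have hmv := Convex.norm_image_sub_le_of_norm_hasFDerivWithin_le hdiff hbound
    (convex_closedBall x0 Δ) hx0m hy
  have hFdiff : F y - F x0 = f y - f x0 - ∑ j, g j * (y j - x0 j) := by
    rw [hF]
    simp only
    have hin : ∀ z : EuclideanSpace ℝ (Fin d), (innerSL ℝ g) z = ∑ j, g j * z j := by
      intro z
      rw [innerSL_apply_apply, PiLp.inner_apply]
      simp [RCLike.inner_apply, mul_comm]
    have hsub : ∑ j, g j * (y j - x0 j) = ∑ j, g j * y j - ∑ j, g j * x0 j := by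
      rw [← Finset.sum_sub_distrib]
      exact Finset.sum_congr rfl fun j _ => by ring
    rw [hin, hin, hsub]
    ring
  have hyd : ‖y - x0‖ ≤ Δ := by
    rw [← dist_eq_norm]
    exact Metric.mem_closedBall.mp hy
  have : ‖F y - F x0‖ ≤ L * Δ * Δ := by
    calc ‖F y - F x0‖ ≤ L * Δ * ‖y - x0‖ := hmv
      _ ≤ L * Δ * Δ := mul_le_mul_of_nonneg_left hyd (by positivity)
  rw [hFdiff] at this
  rw [← Real.norm_eq_abs]
  exact this
/-- Bound on the Hessian of the minimum Frobenius norm interpolation model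
of noisy function values, for a `Λ`-poised interpolation set. -/
theorem mfn_model_hessian_bound
    {d p : ℕ} (hd : 1 ≤ d) (hdp : d ≤ p) (hcard : p + 1 ≤ (d + 1) * (d + 2) / 2)
    (x : Fin (p + 1) → EuclideanSpace ℝ (Fin d))
    (hxinj : Function.Injective x)
    (hpoised : MFNPoised x)
    (Δ : ℝ) (hΔ : 0 < Δ)
    (hx : ∀ i, x i ∈ Metric.closedBall (x 0) Δ)
    (Λ : ℝ) (hΛ : 0 < Λ)
    (la : Fin (p + 1) → Fin (d + 1) → ℝ) (lb : Fin (p + 1) → QIdx d → ℝ)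
    (hlagrange : ∀ i, IsMFNSol x (Pi.single i 1) (la i) (lb i))
    (hlampoised : ∀ i, ∀ y ∈ Metric.closedBall (x 0) Δ, |modelFun (la i) (lb i) y| ≤ Λ)
    (f : EuclideanSpace ℝ (Fin d) → ℝ)
    (Ω : Set (EuclideanSpace ℝ (Fin d))) (hΩ : IsOpen Ω)
    (hBΩ : Metric.closedBall (x 0) Δ ⊆ Ω)
    (hf : ContDiffOn ℝ 1 f Ω)
    (L : ℝ) (hL : 0 ≤ L)
    (hlip : ∀ u ∈ Ω, ∀ v ∈ Ω, ‖gradient f u - gradient f v‖ ≤ L * ‖u - v‖)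
    (e : Fin (p + 1) → ℝ) (ε : Fin (p + 1) → ℝ) (hε : ∀ i, ε i = |e i|)
    (a : Fin (d + 1) → ℝ) (b : QIdx d → ℝ)
    (hmodel : IsMFNSol x (fun i => f (x i) + e i) a b)
    (ν : ℝ) (hν : ν = min (min 1 (1 / Δ)) (1 / Δ ^ 2)) :
    opNorm2 (hessOf b) ≤
      4 * (p + 1) * Λ * L * Real.sqrt ((d + 1) * (d + 2)) / ν
        + (8 * Λ * Real.sqrt ((d + 1) * (d + 2)) / (Δ ^ 2 * ν)) * ∑ i, ε i := by
  classical
  set g := gradient f (x 0) with hg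
  set w : Fin (p+1) → ℝ := fun i => f (x 0) + ∑ j, g j * (x i j - x 0 j) with hwdef
  set α₀ : Fin (d+1) → ℝ := Fin.cons (f (x 0) - ∑ j, g j * x 0 j) (fun j => g j) with hα₀
  have hwfeas : (Mmat x)ᵀ.mulVec α₀ + (Nmat x)ᵀ.mulVec (0 : QIdx d → ℝ) = w := by
    funext i
    simp only [Matrix.mulVec_zero, Pi.add_apply, Pi.zero_apply, add_zero]
    show ∑ k, (Mmat x)ᵀ i k * α₀ k = w i
    have hM : ∀ k, (Mmat x)ᵀ i k = muVec (x i) k := fun k => rfl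
    rw [Fin.sum_univ_succ]
    simp only [hM, hα₀, muVec, Fin.cons_zero, Fin.cons_succ, hwdef]
    have hsub : ∑ j, g j * (x i j - x 0 j) = ∑ j, g j * x i j - ∑ j, g j * x 0 j := by
      rw [← Finset.sum_sub_distrib]
      exact Finset.sum_congr rfl fun j _ => by ring
    rw [hsub]
    have : ∑ j : Fin d, x i j * g j = ∑ j : Fin d, g j * x i j :=
      Finset.sum_congr rfl fun j _ => mul_comm _ _
    rw [this]
    ring
  have hzero : IsMFNSol x w α₀ (0 : QIdx d → ℝ) := by
    refine ⟨hwfeas, fun a' b' _ => ?_⟩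
    simp only [Pi.zero_apply]
    calc ∑ _ij : QIdx d, (0:ℝ)^2 = 0 := by simp
      _ ≤ ∑ ij, (b' ij)^2 := Finset.sum_nonneg fun ij _ => sq_nonneg _
  have hbv : b = fun ij => ∑ i, (f (x i) + e i) * lb i ij :=
    mfn_uniq hmodel (sum_lagrange_sol hlagrange _)
  have hw0 : (fun ij => ∑ i, w i * lb i ij) = (0 : QIdx d → ℝ) :=
    mfn_uniq (sum_lagrange_sol hlagrange w) hzero
  set c : Fin (p+1) → ℝ := fun i => (f (x i) + e i) - w i with hc
  have hbc : ∀ ij, b ij = ∑ i, c i * lb i ij := by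
    intro ij
    have h1 := congrFun hbv ij
    have h2 := congrFun hw0 ij
    simp only [Pi.zero_apply] at h2
    have h3 : ∑ i, c i * lb i ij
        = ∑ i, (f (x i) + e i) * lb i ij - ∑ i, w i * lb i ij := by
      rw [← Finset.sum_sub_distrib]
      exact Finset.sum_congr rfl fun i _ => by rw [hc]; ring
    rw [h1, h3, h2, sub_zero]
  have hεnn : ∀ i, 0 ≤ ε i := fun i => (hε i) ▸ abs_nonneg (e i)
  have hcbound : ∀ i, |c i| ≤ L * Δ * Δ + ε i := by
    intro i
    have htay := taylor_lin_bound f Ω hΩ (x 0) Δ hΔ hBΩ hf L hL hlip (x i) (hx i)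
    have hci : c i = (f (x i) - f (x 0) - ∑ j, g j * (x i j - x 0 j)) + e i := by
      rw [hc]; simp only [hwdef]; ring
    rw [hci, hε i]
    exact (abs_add_le _ _).trans (add_le_add htay le_rfl)
  set S : ℝ := ∑ i, (L * Δ * Δ + ε i) with hS
  have hSnn : 0 ≤ S :=
    Finset.sum_nonneg fun i _ => add_nonneg (by positivity) (hεnn i)
  have habs : ∀ (q : QIdx d) (B : ℝ), 0 ≤ B → (∀ i, |lb i q| ≤ B) → |b q| ≤ B * S := by
    intro q B hB hq
    rw [hbc q]
    calc |∑ i, c i * lb i q| ≤ ∑ i, |c i * lb i q| := Finset.abs_sum_le_sum_abs _ _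
      _ ≤ ∑ i, (L * Δ * Δ + ε i) * B := by
          refine Finset.sum_le_sum fun i _ => ?_
          rw [abs_mul]
          exact mul_le_mul (hcbound i) (hq i) (abs_nonneg _)
            (add_nonneg (by positivity) (hεnn i))
      _ = B * S := by rw [hS, ← Finset.sum_mul]; ring
  have hHentry : ∀ j k, |hessOf b j k| ≤ (4 * Λ / Δ ^ 2) * S := by
    intro j k
    have hBnn : (0:ℝ) ≤ 4 * Λ / Δ ^ 2 := by positivity
    show |(Matrix.of fun j k =>
      if h : j < k then b ⟨(j, k), le_of_lt h⟩
      else if h' : k < j then b ⟨(k, j), le_of_lt h'⟩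
      else 2 * b ⟨(j, j), le_refl j⟩) j k| ≤ (4 * Λ / Δ ^ 2) * S
    simp only [Matrix.of_apply]
    split_ifs with h h'
    · exact habs _ _ hBnn fun i => offdiag_coeff_bound hΔ (hlampoised i) h
    · exact habs _ _ hBnn fun i => offdiag_coeff_bound hΔ (hlampoised i) h'
    · have hd2 : ∀ i, |lb i ⟨(j, j), le_refl j⟩| ≤ 2 * Λ / Δ ^ 2 :=
        fun i => diag_coeff_bound hΔ (hlampoised i) j
      have := habs _ _ (by positivity : (0:ℝ) ≤ 2 * Λ / Δ ^ 2) hd2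
      rw [abs_mul]
      calc |(2:ℝ)| * |b ⟨(j, j), le_refl j⟩| ≤ 2 * ((2 * Λ / Δ ^ 2) * S) := by
            rw [abs_two]
            exact mul_le_mul_of_nonneg_left this (by norm_num)
        _ = (4 * Λ / Δ ^ 2) * S := by ring
  have hmain : opNorm2 (hessOf b) ≤ (d : ℝ) * ((4 * Λ / Δ ^ 2) * S) :=
    opNorm2_le_of_entry _ _ (by positivity) hHentry
  -- numeric endgame
  have hν0 : 0 < ν := by
    rw [hν]
    exact lt_min (lt_min one_pos (by positivity)) (by positivity)
  have hν1 : ν ≤ 1 := by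
    rw [hν]
    exact (min_le_left _ _).trans (min_le_left _ _)
  set R : ℝ := ((d : ℝ) + 1) * ((d : ℝ) + 2) with hR
  have hsd : (d : ℝ) ≤ Real.sqrt R := by
    have hd0 : (0:ℝ) < (d:ℝ) := by
      have : (1:ℝ) ≤ (d:ℝ) := by exact_mod_cast hd
      linarith
    rw [hR]
    refine (Real.le_sqrt' hd0).mpr ?_
    nlinarith [hd0.le]
  have hsR : 0 ≤ Real.sqrt R := Real.sqrt_nonneg _
  have hfinal_eq : (d:ℝ) * ((4 * Λ / Δ ^ 2) * S)
      = 4 * (d:ℝ) * Λ * L * ((p:ℝ) + 1) + (4 * (d:ℝ) * Λ / Δ ^ 2) * ∑ i, ε i := by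
    rw [hS, Finset.sum_add_distrib, Finset.sum_const, Finset.card_univ, Fintype.card_fin,
      nsmul_eq_mul]
    push_cast
    field_simp
  have hA : (0:ℝ) ≤ 4 * ((p:ℝ) + 1) * Λ * L * Real.sqrt R := by positivity
  have t1 : 4 * (d:ℝ) * Λ * L * ((p:ℝ) + 1) ≤ 4 * ((p:ℝ) + 1) * Λ * L * Real.sqrt R / ν := by
    have base : 4 * (d:ℝ) * Λ * L * ((p:ℝ) + 1) ≤ 4 * ((p:ℝ) + 1) * Λ * L * Real.sqrt R := by
      nlinarith [mul_nonneg (mul_nonneg (mul_nonneg hΛ.le hL)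
        (by positivity : (0:ℝ) ≤ (p:ℝ) + 1)) (sub_nonneg.mpr hsd)]
    have step2 : 4 * ((p:ℝ) + 1) * Λ * L * Real.sqrt R
        ≤ 4 * ((p:ℝ) + 1) * Λ * L * Real.sqrt R / ν := by
      exact le_div_self hA hν0 hν1
    linarith
  have hsum_ε : 0 ≤ ∑ i, ε i := Finset.sum_nonneg fun i _ => hεnn i
  have t2 : (4 * (d:ℝ) * Λ / Δ ^ 2) * ∑ i, ε i
      ≤ (8 * Λ * Real.sqrt R / (Δ ^ 2 * ν)) * ∑ i, ε i := by
    refine mul_le_mul_of_nonneg_right ?_ hsum_ε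
    rw [div_le_div_iff₀ (by positivity) (by positivity)]
    have hX : (0:ℝ) ≤ 4 * (d:ℝ) * Λ * Δ ^ 2 := by positivity
    calc 4 * (d:ℝ) * Λ * (Δ ^ 2 * ν) = (4 * (d:ℝ) * Λ * Δ ^ 2) * ν := by ring
      _ ≤ (4 * (d:ℝ) * Λ * Δ ^ 2) * 1 := mul_le_mul_of_nonneg_left hν1 hX
      _ = 4 * Λ * Δ ^ 2 * (d:ℝ) := by ring
      _ ≤ 4 * Λ * Δ ^ 2 * Real.sqrt R := mul_le_mul_of_nonneg_left hsd (by positivity)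
      _ ≤ 8 * Λ * Real.sqrt R * Δ ^ 2 := by
          nlinarith [mul_nonneg (mul_nonneg hΛ.le (sq_nonneg Δ)) hsR]
  calc opNorm2 (hessOf b) ≤ (d : ℝ) * ((4 * Λ / Δ ^ 2) * S) := hmain
    _ = 4 * (d:ℝ) * Λ * L * ((p:ℝ) + 1) + (4 * (d:ℝ) * Λ / Δ ^ 2) * ∑ i, ε i := hfinal_eq
    _ ≤ 4 * ((p:ℝ) + 1) * Λ * L * Real.sqrt R / ν
        + (8 * Λ * Real.sqrt R / (Δ ^ 2 * ν)) * ∑ i, ε i := add_le_add t1 t2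
    _ = 4 * ((p:ℝ) + 1) * Λ * L * Real.sqrt (((d:ℝ) + 1) * ((d:ℝ) + 2)) / ν
        + (8 * Λ * Real.sqrt (((d:ℝ) + 1) * ((d:ℝ) + 2)) / (Δ ^ 2 * ν)) * ∑ i, ε i := by
        rw [hR]

end
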